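/- arXiv:1910.00849 — 5 statements merged into one kernel-verified Lean document; each statement's English description precedes it below -/
import Mathlib

section
/- The standard supervisory controller synthesis function f, defined by f(K, R) = (K', R') where T_{K'} = T_K \ { (q → q') ∈ T_K | q' ∈ R ∨ q is forbidden } and R' = R ∪ { q | (q → q') ∈ T_A^□, q' ∈ R } ∪ Dangling(K'), is monotone on the cpo of pairs (sub-automaton of A, subset of states) ordered by (K,R) ≤ (K',R') iff T_{K'} ⊆ T_K and R ⊆ R'. -/
structure Auto (Q L : Type) where
  q0 : Q
  T : Set (Q × L × Q)
  F : Set Q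

def stepRel {Q L : Type} (T : Set (Q × L × Q)) (q q' : Q) : Prop :=
  ∃ a, (q, a, q') ∈ T

def ReachT {Q L : Type} (T : Set (Q × L × Q)) : Q → Q → Prop :=
  Relation.ReflTransGen (stepRel T)

def DanglingT {Q L : Type} (q0 : Q) (F : Set Q) (T : Set (Q × L × Q)) (q : Q) : Prop :=
  ¬ ReachT T q0 q ∨ ¬ ∃ qf ∈ F, ReachT T q qf

def pairLe {α β : Type} (p p' : Set α × Set β) : Prop :=
  p'.1 ⊆ p.1 ∧ p.2 ⊆ p'.2

/-- Standard supervisory controller synthesis step: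
prune transitions with target in `R` or forbidden source, and add to `R`
sources of uncontrollable transitions of `A` with target in `R`, plus the
dangling states of the pruned automaton. -/
def mpcF {Q L : Type} (A : Auto Q L) (Tunc : Set (Q × L × Q)) (Forb : Set Q)
    (p : Set (Q × L × Q) × Set Q) : Set (Q × L × Q) × Set Q :=
  let TK' := {t ∈ p.1 | ¬ (t.2.2 ∈ p.2 ∨ t.1 ∈ Forb)}
  (TK', p.2 ∪ {q | ∃ a q', (q, a, q') ∈ Tunc ∧ q' ∈ p.2}
            ∪ {q | DanglingT A.q0 A.F TK' q})

/-- The standard supervisory controller synthesis function is monotone on the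
cpo of pairs ordered by `(K,R) ≤ (K',R') ↔ T_{K'} ⊆ T_K ∧ R ⊆ R'`. -/
theorem stmt3 {Q L : Type} [Fintype Q] [Fintype L] (A : Auto Q L)
    (Tunc : Set (Q × L × Q)) (hTunc : Tunc ⊆ A.T) (Forb : Set Q) :
    ∀ p p', pairLe p p' → pairLe (mpcF A Tunc Forb p) (mpcF A Tunc Forb p') := by
  intro p p' hle
  obtain ⟨h1, h2⟩ := hle
  have hT : {t ∈ p'.1 | ¬ (t.2.2 ∈ p'.2 ∨ t.1 ∈ Forb)} ⊆
      {t ∈ p.1 | ¬ (t.2.2 ∈ p.2 ∨ t.1 ∈ Forb)} := by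
    rintro t ⟨ht, hn⟩
    exact ⟨h1 ht, fun h => hn (h.imp (fun hh => h2 hh) id)⟩
  have hReach : ∀ q q', ReachT {t ∈ p'.1 | ¬ (t.2.2 ∈ p'.2 ∨ t.1 ∈ Forb)} q q' →
      ReachT {t ∈ p.1 | ¬ (t.2.2 ∈ p.2 ∨ t.1 ∈ Forb)} q q' := by
    intro q q' h
    exact Relation.ReflTransGen.mono (r := stepRel _) (p := stepRel _) (fun a b ⟨l, hl⟩ => ⟨l, hT hl⟩) q q' h
  constructor
  · exact hT
  · rintro q (hq | hq)
    · rcases hq with hq | hq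
      · exact Or.inl (Or.inl (h2 hq))
      · obtain ⟨a, q', ht, hq'⟩ := hq
        exact Or.inl (Or.inr ⟨a, q', ht, h2 hq'⟩)
    · refine Or.inr ?_
      rcases hq with hq | hq
      · exact Or.inl (fun h => hq (hReach _ _ h))
      · exact Or.inr (fun ⟨qf, hf, h⟩ => hq ⟨qf, hf, hReach _ _ h⟩)
end

section
/- Let (K_s, R_s) be the least fixed point of the standard synthesis function f starting from (A, Dangling(A)), and suppose the initial state q0 ∉ R_s. Then the resulting controller K (obtained from K_s by removing the states in R_s) is non-blocking: every state of K that is reachable from q0 in K can reach a final state in K. -/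
/-- Non-blockingness of the standard synthesised controller: every state of
the controller (the least fixed point `K_s` restricted to states outside
`R_s`) reachable from the initial state can reach a final state within the
controller. -/
theorem stmt4 {Q L : Type} [Fintype Q] [Fintype L] (A : Auto Q L)
    (Tunc : Set (Q × L × Q)) (hTunc : Tunc ⊆ A.T) (Forb : Set Q)
    (Ks : Set (Q × L × Q)) (Rs : Set Q)
    (hiter : ∃ k, (mpcF A Tunc Forb)^[k] (A.T, {q | DanglingT A.q0 A.F A.T q}) = (Ks, Rs))
    (hfix : mpcF A Tunc Forb (Ks, Rs) = (Ks, Rs))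
    (h0 : A.q0 ∉ Rs) :
    ∀ q, ReachT {t ∈ Ks | t.1 ∉ Rs ∧ t.2.2 ∉ Rs} A.q0 q →
      ∃ qf, qf ∈ A.F ∧ qf ∉ Rs ∧ ReachT {t ∈ Ks | t.1 ∉ Rs ∧ t.2.2 ∉ Rs} q qf := by
  -- Extract consequences of the fixpoint equation
  have h1 : {t ∈ Ks | ¬ (t.2.2 ∈ Rs ∨ t.1 ∈ Forb)} = Ks := congrArg Prod.fst hfix
  have htgt : ∀ t ∈ Ks, t.2.2 ∉ Rs := by
    intro t ht
    have : t ∈ {t ∈ Ks | ¬ (t.2.2 ∈ Rs ∨ t.1 ∈ Forb)} := h1.symm ▸ ht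
    exact fun h => this.2 (Or.inl h)
  have hTK' : {t ∈ Ks | ¬ (t.2.2 ∈ Rs ∨ t.1 ∈ Forb)} = Ks := h1
  have h2 : (Rs ∪ {q | ∃ a q', (q, a, q') ∈ Tunc ∧ q' ∈ Rs}
      ∪ {q | DanglingT A.q0 A.F {t ∈ Ks | ¬ (t.2.2 ∈ Rs ∨ t.1 ∈ Forb)} q}) = Rs :=
    congrArg Prod.snd hfix
  have hdang : ∀ q, DanglingT A.q0 A.F Ks q → q ∈ Rs := by
    intro q hq
    rw [hTK'] at h2
    have : q ∈ (Rs ∪ {q | ∃ a q', (q, a, q') ∈ Tunc ∧ q' ∈ Rs} ∪ {q | DanglingT A.q0 A.F Ks q}) := Or.inr hq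
    rwa [h2] at this
  set T' : Set (Q × L × Q) := {t ∈ Ks | t.1 ∉ Rs ∧ t.2.2 ∉ Rs} with hT'
  have hsub : ∀ q q', ReachT T' q q' → ReachT Ks q q' := by
    intro q q' h
    exact Relation.ReflTransGen.mono (r := stepRel T') (p := stepRel Ks) (fun a b ⟨l, hl⟩ => ⟨l, hl.1⟩) q q' h
  -- states reachable in T' from q0 are outside Rs
  intro q hq
  have hqR : q ∉ Rs := by
    induction hq with
    | refl => exact h0
    | tail _ hstep ih =>
      obtain ⟨a, ha⟩ := hstep
      exact ha.2.2
  -- q is reachable in Ks, and not dangling, hence can reach a final state in Ks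
  have hreach : ReachT Ks A.q0 q := hsub _ _ hq
  have hnd : ¬ DanglingT A.q0 A.F Ks q := fun h => hqR (hdang q h)
  have hex : ∃ qf ∈ A.F, ReachT Ks q qf := by
    by_contra h
    exact hnd (Or.inr h)
  obtain ⟨qf, hqf, hpath⟩ := hex
  -- lift the path to T'
  have key : ∀ x y, ReachT Ks x y → x ∉ Rs → ReachT T' x y ∧ y ∉ Rs := by
    intro x y h
    induction h using Relation.ReflTransGen.head_induction_on with
    | refl => exact fun hx => ⟨Relation.ReflTransGen.refl, hx⟩
    | head hstep _ ih =>
      intro hx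
      obtain ⟨a, ha⟩ := hstep
      have hmid := htgt _ ha
      have := ih hmid
      exact ⟨Relation.ReflTransGen.head ⟨a, ⟨ha, hx, hmid⟩⟩ this.1, this.2⟩
  obtain ⟨hp, hfR⟩ := key _ _ hpath hqR
  exact ⟨qf, hqf, hfR, hp⟩
end

section
/- Let (K_s, R_s) be the least fixed point of the standard synthesis function f starting from (A, Dangling(A)), with q0 ∉ R_s. Then the resulting controller is controllable: for every uncontrollable transition (q, a, q') of A whose source q is a (reachable, non-removed) state of the controller, the target q' is not in R_s; equivalently, the controller never disables an uncontrollable transition of A from one of its reachable states by having pruned it. -/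
/-- Controllability of the standard synthesised controller: for every
uncontrollable transition `(q,a,q')` of `A` whose source `q` is a reachable,
non-removed state of the controller, the target `q'` is not in `R_s`. -/
theorem stmt6 {Q L : Type} [Fintype Q] [Fintype L] (A : Auto Q L)
    (Tunc : Set (Q × L × Q)) (hTunc : Tunc ⊆ A.T) (Forb : Set Q)
    (Ks : Set (Q × L × Q)) (Rs : Set Q)
    (hiter : ∃ k, (mpcF A Tunc Forb)^[k] (A.T, {q | DanglingT A.q0 A.F A.T q}) = (Ks, Rs))
    (hfix : mpcF A Tunc Forb (Ks, Rs) = (Ks, Rs))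
    (h0 : A.q0 ∉ Rs) :
    ∀ q a q', (q, a, q') ∈ Tunc →
      ReachT {t ∈ Ks | t.1 ∉ Rs ∧ t.2.2 ∉ Rs} A.q0 q → q ∉ Rs → q' ∉ Rs := by
  intro q a q' hunc _ hq hq'
  have h2 : (mpcF A Tunc Forb (Ks, Rs)).2 = Rs := by rw [hfix]
  apply hq
  rw [← h2]
  exact Or.inl (Or.inr ⟨a, q', hunc, hq'⟩)
end

section
/- The orchestration synthesis function f_o, which at each step removes from K all request transitions and all transitions with target in R, and adds to R the sources of necessary transitions of A that are uncontrollable in the pruned automaton together with its dangling states, is monotone on the cpo of pairs ordered by (K,R) ≤ (K',R') iff T_{K'} ⊆ T_K and R ⊆ R', and hence has a least fixed point reached in finitely many iterations. -/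
/-- Basic actions of a contract automaton: idle, request, or offer. -/
inductive BAct (R : Type) where
  | idle : BAct R
  | req : R → BAct R
  | off : R → BAct R

abbrev CSt (n : ℕ) (S : Type) := Fin n → S
abbrev CAct (n : ℕ) (R : Type) := Fin n → BAct R
abbrev CTrans (n : ℕ) (S R : Type) := CSt n S × CAct n R × CSt n S

def isRequest {n : ℕ} {R : Type} (a : CAct n R) : Prop :=
  ∃ i r, a i = BAct.req r ∧ ∀ j, j ≠ i → a j = BAct.idle

def isOffer {n : ℕ} {R : Type} (a : CAct n R) : Prop :=
  ∃ i r, a i = BAct.off r ∧ ∀ j, j ≠ i → a j = BAct.idle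

def isMatch {n : ℕ} {R : Type} (a : CAct n R) : Prop :=
  ∃ i j r, i ≠ j ∧ a i = BAct.req r ∧ a j = BAct.off r ∧
    ∀ k, k ≠ i → k ≠ j → a k = BAct.idle

/-- `sndIs a i` : the `i`-th component of `a` is an offer, i.e. `snd(a) = i`. -/
def sndIs {n : ℕ} {R : Type} (a : CAct n R) (i : Fin n) : Prop :=
  ∃ r, a i = BAct.off r

/-- A (modal service) contract automaton of rank `n`, with necessary
transitions `Tnec ⊆ T` (the remaining ones being permitted). -/
structure CA (n : ℕ) (S R : Type) where
  q0 : CSt n S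
  T : Set (CTrans n S R)
  Tnec : Set (CTrans n S R)
  F : Set (CSt n S)

/-- `t` is controllable (orchestration sense) in the sub-automaton with
transitions `TK` via witness `t'`. -/
def OrcControllableVia {n : ℕ} {S R : Type} (A : CA n S R) (TK : Set (CTrans n S R))
    (t t' : CTrans n S R) : Prop :=
  t' ∈ A.Tnec ∧ t' ∈ TK ∧ isMatch t'.2.1 ∧
  ¬ DanglingT A.q0 A.F TK t'.1 ∧ ¬ DanglingT A.q0 A.F TK t'.2.2 ∧
  ∃ i r, t.1 i = t'.1 i ∧ t.2.1 i = BAct.req r ∧ t'.2.1 i = BAct.req r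

def OrcControllable {n : ℕ} {S R : Type} (A : CA n S R) (TK : Set (CTrans n S R))
    (t : CTrans n S R) : Prop :=
  ∃ t', OrcControllableVia A TK t t'

/-- The orchestration synthesis step. -/
def orcF {n : ℕ} {S R : Type} (A : CA n S R)
    (p : Set (CTrans n S R) × Set (CSt n S)) : Set (CTrans n S R) × Set (CSt n S) :=
  let TK' := {t ∈ p.1 | ¬ (t.2.2 ∈ p.2 ∨ isRequest t.2.1)}
  (TK', p.2 ∪ {q | ∃ t ∈ A.Tnec, t.1 = q ∧ ¬ OrcControllable A TK' t}
            ∪ {q | DanglingT A.q0 A.F TK' q})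

/-- Restriction of transitions to states outside the bad set. -/
def restr {n : ℕ} {S R : Type} (Ks : Set (CTrans n S R)) (Rs : Set (CSt n S)) :
    Set (CTrans n S R) :=
  {t ∈ Ks | t.1 ∉ Rs ∧ t.2.2 ∉ Rs}

instance {R : Type} [Finite R] : Finite (BAct R) := by
  apply Finite.of_surjective (fun o : Unit ⊕ R ⊕ R =>
    match o with
    | Sum.inl _ => BAct.idle
    | Sum.inr (Sum.inl r) => BAct.req r
    | Sum.inr (Sum.inr r) => BAct.off r)
  intro b
  cases b with
  | idle => exact ⟨Sum.inl (), rfl⟩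
  | req r => exact ⟨Sum.inr (Sum.inl r), rfl⟩
  | off r => exact ⟨Sum.inr (Sum.inr r), rfl⟩

lemma reachT_mono {Q L : Type} {T T' : Set (Q × L × Q)} (h : T ⊆ T') {q q' : Q}
    (hr : ReachT T q q') : ReachT T' q q' :=
  Relation.ReflTransGen.mono (r := stepRel T) (p := stepRel T') (fun _ _ ⟨a, ha⟩ => ⟨a, h ha⟩) _ _ hr

lemma dangling_mono {Q L : Type} {q0 : Q} {F : Set Q} {T T' : Set (Q × L × Q)}
    (h : T' ⊆ T) {q : Q} (hd : DanglingT q0 F T q) : DanglingT q0 F T' q := by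
  rcases hd with h1 | h2
  · exact Or.inl fun hr => h1 (reachT_mono h hr)
  · exact Or.inr fun ⟨qf, hqf, hr⟩ => h2 ⟨qf, hqf, reachT_mono h hr⟩

lemma pairLe_refl {α β : Type} (p : Set α × Set β) : pairLe p p :=
  ⟨subset_rfl, subset_rfl⟩

lemma pairLe_trans {α β : Type} {p q r : Set α × Set β}
    (h1 : pairLe p q) (h2 : pairLe q r) : pairLe p r :=
  ⟨h2.1.trans h1.1, h1.2.trans h2.2⟩

lemma orcF_mono {n : ℕ} {S R : Type} (A : CA n S R) :
    ∀ p p', pairLe p p' → pairLe (orcF A p) (orcF A p') := by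
  intro p p' ⟨h1, h2⟩
  have hTK : {t ∈ p'.1 | ¬ (t.2.2 ∈ p'.2 ∨ isRequest t.2.1)} ⊆
      {t ∈ p.1 | ¬ (t.2.2 ∈ p.2 ∨ isRequest t.2.1)} := by
    rintro t ⟨ht1, ht2⟩
    exact ⟨h1 ht1, fun hc => ht2 (hc.imp (fun h => h2 h) id)⟩
  constructor
  · exact hTK
  · rintro q (⟨hq | hq⟩ | hq)
    · exact Or.inl (Or.inl (h2 hq))
    · rcases hq with ⟨t, ht, hsrc, hnc⟩
      refine Or.inl (Or.inr ⟨t, ht, hsrc, fun ⟨t', h1', h2', h3', h4', h5', h6'⟩ => ?_⟩)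
      exact hnc ⟨t', h1', hTK h2', h3',
        fun hd => h4' (dangling_mono hTK hd),
        fun hd => h5' (dangling_mono hTK hd), h6'⟩
    · exact Or.inr (dangling_mono hTK hq)

lemma orcF_infl {n : ℕ} {S R : Type} (A : CA n S R)
    (p : Set (CTrans n S R) × Set (CSt n S)) : pairLe p (orcF A p) := by
  constructor
  · intro t ht; exact ht.1
  · intro q hq; exact Or.inl (Or.inl hq)

/-- The orchestration synthesis function is monotone on the cpo of pairs and
hence has a least fixed point above the starting pair, reached after finitely
many iterations. -/
theorem stmt7 {n : ℕ} {S R : Type} [Fintype S] [Fintype R] (A : CA n S R)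
    (hnec : A.Tnec ⊆ A.T) :
    (∀ p p', pairLe p p' → pairLe (orcF A p) (orcF A p')) ∧
    (∃ k, orcF A ((orcF A)^[k] (A.T, {q | DanglingT A.q0 A.F A.T q}))
            = (orcF A)^[k] (A.T, {q | DanglingT A.q0 A.F A.T q}) ∧
      pairLe (A.T, {q | DanglingT A.q0 A.F A.T q})
             ((orcF A)^[k] (A.T, {q | DanglingT A.q0 A.F A.T q})) ∧
      ∀ x, orcF A x = x → pairLe (A.T, {q | DanglingT A.q0 A.F A.T q}) x →
        pairLe ((orcF A)^[k] (A.T, {q | DanglingT A.q0 A.F A.T q})) x) := by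
  refine ⟨orcF_mono A, ?_⟩
  set p0 : Set (CTrans n S R) × Set (CSt n S) :=
    (A.T, {q | DanglingT A.q0 A.F A.T q}) with hp0
  set f := orcF A with hf
  set μ : Set (CTrans n S R) × Set (CSt n S) → ℕ :=
    fun p => p.1.ncard + (p.2ᶜ).ncard with hμ
  -- chain
  have hchain : ∀ k, pairLe (f^[k] p0) (f^[k+1] p0) := by
    intro k
    rw [Function.iterate_succ_apply']
    exact orcF_infl A _
  have hle0 : ∀ k, pairLe p0 (f^[k] p0) := by
    intro k
    induction k with
    | zero => exact pairLe_refl _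
    | succ k ih => exact pairLe_trans ih (hchain k)
  -- measure strictly decreases while not fixed
  have hdec : ∀ k, f (f^[k] p0) ≠ f^[k] p0 → μ (f^[k+1] p0) < μ (f^[k] p0) := by
    intro k hne
    have hle := hchain k
    set a := f^[k] p0
    set b := f^[k+1] p0
    have hb : b = f a := by simp [a, b, Function.iterate_succ_apply']
    have hne' : b ≠ a := by rw [hb]; exact hne
    have h1 : b.1 ⊆ a.1 := hle.1
    have h2 : a.2 ⊆ b.2 := hle.2
    have h2' : b.2ᶜ ⊆ a.2ᶜ := Set.compl_subset_compl.mpr h2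
    have hcases : b.1 ≠ a.1 ∨ b.2 ≠ a.2 := by
      by_contra hc
      push_neg at hc
      exact hne' (Prod.ext hc.1 hc.2)
    rcases hcases with hne1 | hne2
    · have : b.1.ncard < a.1.ncard :=
        Set.ncard_lt_ncard (ssubset_of_subset_of_ne h1 hne1) (Set.toFinite _)
      have h2c : (b.2ᶜ).ncard ≤ (a.2ᶜ).ncard :=
        Set.ncard_le_ncard h2' (Set.toFinite _)
      simp only [hμ]
      omega
    · have hne2' : b.2ᶜ ≠ a.2ᶜ := fun h => hne2 (by
        have := congrArg compl h; simpa using this)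
      have : (b.2ᶜ).ncard < (a.2ᶜ).ncard :=
        Set.ncard_lt_ncard (ssubset_of_subset_of_ne h2' hne2') (Set.toFinite _)
      have h1c : b.1.ncard ≤ a.1.ncard := Set.ncard_le_ncard h1 (Set.toFinite _)
      simp only [hμ]
      omega
  -- existence of a fixed iterate
  have hex : ∃ k, f (f^[k] p0) = f^[k] p0 := by
    by_contra hc
    push_neg at hc
    have hstep : ∀ k, μ (f^[k+1] p0) < μ (f^[k] p0) := fun k => hdec k (hc k)
    have hbound : ∀ k, μ (f^[k] p0) + k ≤ μ p0 := by
      intro k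
      induction k with
      | zero => simp
      | succ k ih =>
        have := hstep k
        omega
    have := hbound (μ p0 + 1)
    omega
  obtain ⟨k, hk⟩ := hex
  have hlek : ∀ x, orcF A x = x → pairLe p0 x → ∀ m, pairLe (f^[m] p0) x := by
    intro x hx hx0 m
    induction m with
    | zero => exact hx0
    | succ m ih =>
      have h2 : pairLe (f (f^[m] p0)) (f x) := orcF_mono A _ _ ih
      rw [show f x = x from hx] at h2
      rw [Function.iterate_succ_apply']
      exact h2
  exact ⟨k, hk, hle0 k, fun x hx hx0 => hlek x hx hx0 k⟩
end

section
/- The abstract synthesis function f_{(φ_p, φ_f)}, defined by removing from K all transitions t with φ_p(t, K, R) = true and adding to R all source states of necessary transitions t of A with φ_f(t, K, R) = true together with the dangling states of the pruned automaton, is monotone on the cpo of pairs (K, R) provided φ_p and φ_f are antitone in K and monotone in R (i.e., if T_{K'} ⊆ T_K and R ⊆ R' then φ(t, K, R) = true implies φ(t, K', R') = true). -/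
/-- The abstract synthesis step for pruning predicate `phip` and forbidden
predicate `phif`. -/
def absF {Q L : Type} (q0 : Q) (F : Set Q) (Tnec : Set (Q × L × Q))
    (phip phif : (Q × L × Q) → Set (Q × L × Q) → Set Q → Prop)
    (p : Set (Q × L × Q) × Set Q) : Set (Q × L × Q) × Set Q :=
  let TK' := {t ∈ p.1 | ¬ phip t p.1 p.2}
  (TK', p.2 ∪ {q | ∃ t ∈ Tnec, t.1 = q ∧ phif t p.1 p.2}
            ∪ {q | DanglingT q0 F TK' q})

/-- The abstract synthesis function is monotone on the cpo of pairs provided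
the pruning and forbidden predicates are antitone in the automaton component
and monotone in the bad-state component. -/
theorem stmt11 {Q L : Type} [Fintype Q] [Fintype L] (A : Auto Q L)
    (Tnec : Set (Q × L × Q)) (hTnec : Tnec ⊆ A.T)
    (phip phif : (Q × L × Q) → Set (Q × L × Q) → Set Q → Prop)
    (hphip : ∀ t T T' Rr Rr', T' ⊆ T → Rr ⊆ Rr' → phip t T Rr → phip t T' Rr')
    (hphif : ∀ t T T' Rr Rr', T' ⊆ T → Rr ⊆ Rr' → phif t T Rr → phif t T' Rr') :
    ∀ p p', pairLe p p' →
      pairLe (absF A.q0 A.F Tnec phip phif p) (absF A.q0 A.F Tnec phip phif p') := by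
  intro p p' hp
  obtain ⟨h1, h2⟩ := hp
  have hT : {t ∈ p'.1 | ¬ phip t p'.1 p'.2} ⊆ {t ∈ p.1 | ¬ phip t p.1 p.2} := by
    rintro t ⟨ht, hnp⟩
    exact ⟨h1 ht, fun h => hnp (hphip t p.1 p'.1 p.2 p'.2 h1 h2 h)⟩
  have hreach : ∀ q q', ReachT {t ∈ p'.1 | ¬ phip t p'.1 p'.2} q q' →
      ReachT {t ∈ p.1 | ¬ phip t p.1 p.2} q q' := by
    intro q q' h
    refine Relation.ReflTransGen.mono ?_ q q' h
    rintro a b ⟨l, hl⟩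
    exact ⟨l, hT hl⟩
  constructor
  · exact hT
  · rintro q (( hq | ⟨t, htn, rfl, hf⟩) | hd)
    · exact Or.inl (Or.inl (h2 hq))
    · exact Or.inl (Or.inr ⟨t, htn, rfl, hphif t p.1 p'.1 p.2 p'.2 h1 h2 hf⟩)
    · refine Or.inr ?_
      rcases hd with hd | hd
      · exact Or.inl (fun h => hd (hreach _ _ h))
      · exact Or.inr (fun ⟨qf, hqf, h⟩ => hd ⟨qf, hqf, hreach _ _ h⟩)
end
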